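/- arXiv:0907.4592 — 2 statements merged into one kernel-verified Lean document; each statement's English description precedes it below -/
import Mathlib

section
/- Assume (H0) and (H3), and let t > 0. Let a = (α, β) ∈ ℝ^d and ā = (α, β̄) have the same first d−1 coordinates, with φ(a) = φ(ā) = t and φ₀(ā) < t. Then the function h(z) = e^{a·z} − ((t − φ₀(a))/(t − φ₀(ā))) e^{ā·z} on E = ℤ^{d-1} × ℕ satisfies Σ_{z'∈E} p(z,z') h(z') = t h(z) for every z ∈ E, i.e. h is t-harmonic for P. -/
open scoped Classical BigOperators
open Filter

noncomputable section

namespace RWHalfspace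

/-- `ℤ^d` modeled as `ℤ^{d-1} × ℤ`; the Lean parameter `d` is the paper's `d-1`,
so that the paper's hypothesis `d ≥ 1` is automatic. -/
abbrev Zd (d : ℕ) := (Fin d → ℤ) × ℤ
/-- The state space `E = ℤ^{d-1} × ℕ`. -/
abbrev Ed (d : ℕ) := (Fin d → ℤ) × ℕ
/-- `ℝ^d` modeled as `ℝ^{d-1} × ℝ`. -/
abbrev Rd (d : ℕ) := (Fin d → ℝ) × ℝ

variable {d : ℕ}

/-- The scalar product `a · z` for `a ∈ ℝ^d`, `z ∈ ℤ^d`. -/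
def dotZ (a : Rd d) (z : Zd d) : ℝ := (∑ i, a.1 i * (z.1 i : ℝ)) + a.2 * (z.2 : ℝ)

/-- The scalar product on `ℝ^d`. -/
def dotR (a b : Rd d) : ℝ := (∑ i, a.1 i * b.1 i) + a.2 * b.2

/-- The scalar product `a · z` for `a ∈ ℝ^d`, `z ∈ E = ℤ^{d-1} × ℕ`. -/
def dotE (a : Rd d) (z : Ed d) : ℝ := (∑ i, a.1 i * (z.1 i : ℝ)) + a.2 * (z.2 : ℝ)

/-- The jump generating function `φ(a) = ∑_{z ∈ ℤ^d} μ(z) e^{a·z}`. -/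
def phi (μ : Zd d → ℝ) (a : Rd d) : ℝ := ∑' z, μ z * Real.exp (dotZ a z)

/-- The difference `z' - z ∈ ℤ^d` of two points of `E`. -/
def jump (z z' : Ed d) : Zd d := (z'.1 - z.1, (z'.2 : ℤ) - (z.2 : ℤ))

/-- The transition kernel of the reflected random walk on `E = ℤ^{d-1} × ℕ`. -/
def ker (μ μ₀ : Zd d → ℝ) (z z' : Ed d) : ℝ :=
  if z.2 = 0 then μ₀ (jump z z') else μ (jump z z')

/-- The `n`-step transition kernel `p^(n)`. -/
def kerN (μ μ₀ : Zd d → ℝ) : ℕ → Ed d → Ed d → ℝ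
  | 0 => fun z z' => if z = z' then 1 else 0
  | n + 1 => fun z z' => ∑' w, kerN μ μ₀ n z w * ker μ μ₀ w z'

/-- The `n`-step kernel of the homogeneous random walk on `ℤ^d` with step distribution `μ`. -/
def homN (μ : Zd d → ℝ) : ℕ → Zd d → Zd d → ℝ
  | 0 => fun z z' => if z = z' then 1 else 0
  | n + 1 => fun z z' => ∑' w, homN μ n z w * μ (z' - w)

/-- The step distribution of the last coordinate of the homogeneous random walk. -/
def lastStep (μ : Zd d → ℝ) (k : ℤ) : ℝ := ∑' x : Fin d → ℤ, μ (x, k)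

/-- The `n`-step kernel of the last coordinate random walk on `ℤ`. -/
def lastN (μ : Zd d → ℝ) : ℕ → ℤ → ℤ → ℝ
  | 0 => fun k k' => if k = k' then 1 else 0
  | n + 1 => fun k k' => ∑' j, lastN μ n k j * lastStep μ (k' - j)

/-- The convergence norm `ρ(P) = limsup_n (p^(n)(z,z'))^{1/n}` (independent of `z, z'`
by irreducibility; we take `z = z' = 0`). -/
def rho (μ μ₀ : Zd d → ℝ) : ℝ :=
  limsup (fun n : ℕ => (kerN μ μ₀ n 0 0) ^ ((n : ℝ)⁻¹)) atTop

/-- `μ` is a nonnegative measure on `ℤ^d` with `0 < μ(ℤ^d) ≤ 1`. -/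
def IsMeasure (μ : Zd d → ℝ) : Prop := (∀ z, 0 ≤ μ z) ∧ 0 < ∑' z, μ z ∧ ∑' z, μ z ≤ 1

/-- (H0): `μ(x,y) = 0` for `y < -1` and `μ₀(x,y) = 0` for `y < 0`. -/
def H0 (μ μ₀ : Zd d → ℝ) : Prop :=
  (∀ z : Zd d, z.2 < -1 → μ z = 0) ∧ (∀ z : Zd d, z.2 < 0 → μ₀ z = 0)

/-- (H1): the kernel `P` is irreducible on `E`. -/
def H1 (μ μ₀ : Zd d → ℝ) : Prop := ∀ z z' : Ed d, ∃ n, 0 < kerN μ μ₀ n z z'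

/-- (H2): the homogeneous random walk with step distribution `μ` is irreducible on `ℤ^d`. -/
def H2 (μ : Zd d → ℝ) : Prop := ∀ z z' : Zd d, ∃ n, 0 < homN μ n z z'

/-- (H3) for a single measure: the jump generating function is finite everywhere
(the defining series converges for every `a ∈ ℝ^d`). -/
def H3 (μ : Zd d → ℝ) : Prop := ∀ a : Rd d, Summable fun z => μ z * Real.exp (dotZ a z)

/-- (H4): the last coordinate of the `μ`-random walk is aperiodic
(the gcd of `{n : p^n(0,0) > 0}` equals `1`). -/
def H4 (μ : Zd d → ℝ) : Prop := ∀ m : ℕ, (∀ n : ℕ, 0 < lastN μ n 0 0 → m ∣ n) → m = 1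

/-- The sublevel set `D^t = {a : φ(a) ≤ t}`. -/
def Dset (μ : Zd d → ℝ) (t : ℝ) : Set (Rd d) := {a | phi μ a ≤ t}

/-- `Θ^t = {α ∈ ℝ^{d-1} : inf_β max(φ(α,β), φ₀(α,β)) ≤ t}`. -/
def Theta (μ μ₀ : Zd d → ℝ) (t : ℝ) : Set (Fin d → ℝ) :=
  {α | sInf (Set.range fun β : ℝ => max (phi μ (α, β)) (phi μ₀ (α, β))) ≤ t}

/-- `Ĥ^t = (Θ^t × ℝ) ∩ D^t`. -/
def Hhat (μ μ₀ : Zd d → ℝ) (t : ℝ) : Set (Rd d) :=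
  {a | a.1 ∈ Theta μ μ₀ t ∧ phi μ a ≤ t}

/-- Partial derivative of `f : ℝ^d → ℝ` in the last coordinate. -/
def dBeta (f : Rd d → ℝ) (a : Rd d) : ℝ := fderiv ℝ f a (0, 1)

/-- The (coordinate) gradient of `f : ℝ^d → ℝ`. -/
def gradV (f : Rd d → ℝ) (a : Rd d) : Rd d :=
  (fun i => fderiv ℝ f a (Pi.single i 1, 0), fderiv ℝ f a (0, 1))

/-- `∂₊D^t`: boundary points of `D^t` where the last coordinate of `∇φ` is `≥ 0`. -/
def dPlus (μ : Zd d → ℝ) (t : ℝ) : Set (Rd d) :=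
  {a | a ∈ frontier (Dset μ t) ∧ 0 ≤ dBeta (phi μ) a}

/-- `∂₀D^t`: boundary points of `D^t` where the last coordinate of `∇φ` is `0`. -/
def dZero (μ : Zd d → ℝ) (t : ℝ) : Set (Rd d) :=
  {a | a ∈ frontier (Dset μ t) ∧ dBeta (phi μ) a = 0}

/-- `Γ₊^t = Ĥ^t ∩ ∂₊D^t`. -/
def GammaPlus (μ μ₀ : Zd d → ℝ) (t : ℝ) : Set (Rd d) := Hhat μ μ₀ t ∩ dPlus μ t

/-- The normal cone `V_t(a)` to `Ĥ^t` at `a`. -/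
def Vcone (μ μ₀ : Zd d → ℝ) (t : ℝ) (a : Rd d) : Set (Rd d) :=
  {q | ∀ a' ∈ Hhat μ μ₀ t, dotR q (a' - a) ≤ 0}

/-- `β̄ = min{b : φ(α,b) ≤ t}`. -/
def betaBar (μ : Zd d → ℝ) (t : ℝ) (α : Fin d → ℝ) : ℝ := sInf {b : ℝ | phi μ (α, b) ≤ t}

/-- `ā^t`: the lowest point of `D^t` with the same first `d-1` coordinates as `a`. -/
def abar (μ : Zd d → ℝ) (t : ℝ) (a : Rd d) : Rd d := (a.1, betaBar μ t a.1)

/-- The Green function `G_t(z,z') = ∑_n t^{-n} p^(n)(z,z')`. -/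
def green (μ μ₀ : Zd d → ℝ) (t : ℝ) (z z' : Ed d) : ℝ :=
  ∑' n, (t ^ n)⁻¹ * kerN μ μ₀ n z z'

/-- The `t`-Martin kernel `K_t(z,z') = G_t(z,z')/G_t(z₀,z')` with reference point `z₀`. -/
def martin (μ μ₀ : Zd d → ℝ) (t : ℝ) (z₀ z z' : Ed d) : ℝ :=
  green μ μ₀ t z z' / green μ μ₀ t z₀ z'

/-- Euclidean norm on `ℝ^d = ℝ^{d-1} × ℝ`. -/
def euclNorm (a : Rd d) : ℝ := Real.sqrt ((∑ i, a.1 i ^ 2) + a.2 ^ 2)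

/-- The point of `ℝ^d` corresponding to `z ∈ E`. -/
def vecE (z : Ed d) : Rd d := (fun i => (z.1 i : ℝ), (z.2 : ℝ))

/-- Euclidean distance from a point `v` to a set `S ⊆ ℝ^d`. -/
def distTo (S : Set (Rd d)) (v : Rd d) : ℝ := sInf ((fun q => euclNorm (v - q)) '' S)

/-- The function `h_{a,t}` of the paper. -/
def hFun (μ μ₀ : Zd d → ℝ) (t : ℝ) (a : Rd d) (z : Ed d) : ℝ :=
  if a ∉ dZero μ t ∧ phi μ₀ (abar μ t a) < t then
    Real.exp (dotE a z)
      - ((t - phi μ₀ a) / (t - phi μ₀ (abar μ t a))) * Real.exp (dotE (abar μ t a) z)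
  else if a = abar μ t a ∧ a ∈ dZero μ t ∧ phi μ₀ a < t then
    ((z.2 : ℝ) + dBeta (phi μ₀) a / (t - phi μ₀ a)) * Real.exp (dotE a z)
  else Real.exp (dotE (abar μ t a) z)


lemma dotZ_jump {d : ℕ} (a : Rd d) (z z' : Ed d) :
    dotZ a (jump z z') = dotE a z' - dotE a z := by
  simp only [dotZ, dotE, jump, Pi.sub_apply]
  push_cast
  simp only [mul_sub]
  rw [Finset.sum_sub_distrib]
  ring

lemma shift_tsum {d : ℕ} (ν : Zd d → ℝ) (a : Rd d) (z : Ed d)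
    (hvan : ∀ w : Zd d, w.2 < -(z.2 : ℤ) → ν w = 0)
    (hsum : Summable fun w : Zd d => ν w * Real.exp (dotZ a w)) :
    Summable (fun z' : Ed d => ν (jump z z') * Real.exp (dotE a z')) ∧
    ∑' z' : Ed d, ν (jump z z') * Real.exp (dotE a z')
      = Real.exp (dotE a z) * phi ν a := by
  set f : Zd d → ℝ := fun w => ν w * Real.exp (dotZ a w) * Real.exp (dotE a z) with hf
  set ι : Ed d → Zd d := fun z' => jump z z' with hι
  have hinj : Function.Injective ι := by
    intro z1 z2 h
    simp only [hι, jump, Prod.mk.injEq] at h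
    have h1 : z1.1 = z2.1 := sub_left_injective h.1
    have h2 : z1.2 = z2.2 := by have := h.2; omega
    exact Prod.ext h1 h2
  have hrange : ∀ w : Zd d, w ∉ Set.range ι → f w = 0 := by
    intro w hw
    have hlt : w.2 < -(z.2 : ℤ) := by
      by_contra hge
      push_neg at hge
      apply hw
      refine ⟨(w.1 + z.1, (w.2 + (z.2 : ℤ)).toNat), ?_⟩
      simp only [hι, jump]
      exact Prod.ext (by simp) (by rw [Int.toNat_of_nonneg (by omega)]; ring)
    simp [hf, hvan w hlt]
  have hcomp : ∀ z' : Ed d, f (ι z') = ν (jump z z') * Real.exp (dotE a z') := by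
    intro z'
    simp only [hf, hι, dotZ_jump, mul_assoc, ← Real.exp_add]
    ring_nf
  have hfs : Summable f := hsum.mul_right _
  have hcs : Summable (fun z' : Ed d => ν (jump z z') * Real.exp (dotE a z')) := by
    rw [← summable_congr hcomp]
    exact (hinj.summable_iff hrange).mpr hfs
  refine ⟨hcs, ?_⟩
  calc ∑' z' : Ed d, ν (jump z z') * Real.exp (dotE a z')
      = ∑' z' : Ed d, f (ι z') := tsum_congr fun z' => (hcomp z').symm
    _ = ∑' w : Zd d, f w := hinj.tsum_eq (fun w hw => by
          by_contra hc; exact hw (hrange w hc))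
    _ = (∑' w : Zd d, ν w * Real.exp (dotZ a w)) * Real.exp (dotE a z) := tsum_mul_right
    _ = Real.exp (dotE a z) * phi ν a := by rw [phi]; ring

/-- under (H0) and (H3), if `a = (α,β)` and `ā = (α,β̄)` have the same
first `d-1` coordinates, `φ(a) = φ(ā) = t` and `φ₀(ā) < t`, then
`h(z) = e^{a·z} − ((t − φ₀(a))/(t − φ₀(ā))) e^{ā·z}` is `t`-harmonic for `P`. -/
theorem h_first_case_harmonic {d : ℕ} (μ μ₀ : Zd d → ℝ)
    (hμ : IsMeasure μ) (hμ₀ : IsMeasure μ₀)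
    (h0 : H0 μ μ₀) (h3 : H3 μ) (h3' : H3 μ₀)
    (t : ℝ) (ht : 0 < t) (a abarv : Rd d) (hsame : abarv.1 = a.1)
    (hphia : phi μ a = t) (hphiab : phi μ abarv = t) (hphi0 : phi μ₀ abarv < t) :
    ∀ z : Ed d,
      ∑' z' : Ed d, ker μ μ₀ z z' *
          (Real.exp (dotE a z')
            - ((t - phi μ₀ a) / (t - phi μ₀ abarv)) * Real.exp (dotE abarv z'))
        = t * (Real.exp (dotE a z)
            - ((t - phi μ₀ a) / (t - phi μ₀ abarv)) * Real.exp (dotE abarv z)) := by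
  intro z
  set r : ℝ := (t - phi μ₀ a) / (t - phi μ₀ abarv) with hr
  have hne : t - phi μ₀ abarv ≠ 0 := by linarith
  by_cases hz : z.2 = 0
  · -- boundary case: kernel is μ₀
    have hker : ∀ z' : Ed d, ker μ μ₀ z z' = μ₀ (jump z z') := by
      intro z'; simp [ker, hz]
    have hvan : ∀ w : Zd d, w.2 < -(z.2 : ℤ) → μ₀ w = 0 := by
      intro w hw
      exact h0.2 w (by omega)
    obtain ⟨hs1, he1⟩ := shift_tsum μ₀ a z hvan (h3' a)
    obtain ⟨hs2, he2⟩ := shift_tsum μ₀ abarv z hvan (h3' abarv)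
    have hdot : dotE abarv z = dotE a z := by
      simp [dotE, hz, hsame]
    calc ∑' z' : Ed d, ker μ μ₀ z z' *
            (Real.exp (dotE a z') - r * Real.exp (dotE abarv z'))
        = ∑' z' : Ed d, (μ₀ (jump z z') * Real.exp (dotE a z')
            - r * (μ₀ (jump z z') * Real.exp (dotE abarv z'))) := by
          refine tsum_congr fun z' => ?_; rw [hker]; ring
      _ = (∑' z' : Ed d, μ₀ (jump z z') * Real.exp (dotE a z'))
            - ∑' z' : Ed d, r * (μ₀ (jump z z') * Real.exp (dotE abarv z')) :=
          Summable.tsum_sub hs1 (hs2.mul_left r)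
      _ = Real.exp (dotE a z) * phi μ₀ a
            - r * (Real.exp (dotE abarv z) * phi μ₀ abarv) := by
          rw [he1, tsum_mul_left, he2]
      _ = t * (Real.exp (dotE a z) - r * Real.exp (dotE abarv z)) := by
          rw [hdot, hr]
          field_simp
          ring
  · -- interior case: kernel is μ
    have hz1 : 1 ≤ (z.2 : ℤ) := by omega
    have hker : ∀ z' : Ed d, ker μ μ₀ z z' = μ (jump z z') := by
      intro z'; simp [ker, hz]
    have hvan : ∀ w : Zd d, w.2 < -(z.2 : ℤ) → μ w = 0 := by
      intro w hw
      exact h0.1 w (by omega)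
    obtain ⟨hs1, he1⟩ := shift_tsum μ a z hvan (h3 a)
    obtain ⟨hs2, he2⟩ := shift_tsum μ abarv z hvan (h3 abarv)
    calc ∑' z' : Ed d, ker μ μ₀ z z' *
            (Real.exp (dotE a z') - r * Real.exp (dotE abarv z'))
        = ∑' z' : Ed d, (μ (jump z z') * Real.exp (dotE a z')
            - r * (μ (jump z z') * Real.exp (dotE abarv z'))) := by
          refine tsum_congr fun z' => ?_; rw [hker]; ring
      _ = (∑' z' : Ed d, μ (jump z z') * Real.exp (dotE a z'))
            - ∑' z' : Ed d, r * (μ (jump z z') * Real.exp (dotE abarv z')) :=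
          Summable.tsum_sub hs1 (hs2.mul_left r)
      _ = Real.exp (dotE a z) * phi μ a
            - r * (Real.exp (dotE abarv z) * phi μ abarv) := by
          rw [he1, tsum_mul_left, he2]
      _ = t * (Real.exp (dotE a z) - r * Real.exp (dotE abarv z)) := by
          rw [hphia, hphiab]; ring
end RWHalfspace
end
end

section
/- Let d = 2 and assume (H0), (H1), (H3). Suppose inf_{a∈ℝ²} max(φ(a), φ₀(a)) > inf_{a∈ℝ²} φ(a) and that the minimum of a ↦ max(φ(a), φ₀(a)) over ℝ² is attained at a point a* = (α*, β*). Then φ(a*) = φ₀(a*), (∂φ/∂β)(a*) ≤ 0, and (∂φ₀/∂β)(a*) > 0, where ∂/∂β denotes the partial derivative with respect to the second coordinate. -/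
open scoped Classical BigOperators
open Filter
open Topology

noncomputable section
set_option maxHeartbeats 1000000

namespace RWHalfspace

variable {d : ℕ}

def ell (z : Zd 1) : Rd 1 →L[ℝ] ℝ :=
  ((z.1 0 : ℝ) • ((ContinuousLinearMap.proj (R := ℝ) (φ := fun _ : Fin 1 => ℝ) 0).comp
      (ContinuousLinearMap.fst ℝ (Fin 1 → ℝ) ℝ))) + (z.2 : ℝ) • ContinuousLinearMap.snd ℝ (Fin 1 → ℝ) ℝ

lemma ell_apply (z : Zd 1) (a : Rd 1) : ell z a = (z.1 0 : ℝ) * a.1 0 + (z.2 : ℝ) * a.2 := by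
  simp [ell]

lemma dotZ_eq (a : Rd 1) (z : Zd 1) : dotZ a z = ell z a := by
  simp [dotZ, ell_apply, Fin.sum_univ_one]; ring

def nz (z : Zd 1) : ℝ := |((z.1 0 : ℤ) : ℝ)| + |((z.2 : ℤ) : ℝ)|

lemma nz_nonneg (z : Zd 1) : 0 ≤ nz z := add_nonneg (abs_nonneg _) (abs_nonneg _)

lemma norm_ell_le (z : Zd 1) : ‖ell z‖ ≤ nz z := by
  refine ContinuousLinearMap.opNorm_le_bound _ (nz_nonneg z) (fun a => ?_)
  rw [ell_apply]
  have h1 : |a.1 0| ≤ ‖a‖ := (norm_le_pi_norm a.1 0).trans (norm_fst_le a)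
  have h2 : |a.2| ≤ ‖a‖ := norm_snd_le a
  calc |(z.1 0 : ℝ) * a.1 0 + (z.2 : ℝ) * a.2|
      ≤ |(z.1 0 : ℝ) * a.1 0| + |(z.2 : ℝ) * a.2| := abs_add_le _ _
    _ ≤ |(z.1 0 : ℝ)| * ‖a‖ + |(z.2 : ℝ)| * ‖a‖ := by
        rw [abs_mul, abs_mul]
        gcongr
    _ = nz z * ‖a‖ := by rw [nz]; ring

lemma dotZ_shift (a : Rd 1) (s t : ℝ) (z : Zd 1) :
    dotZ ((fun i => a.1 i + s), a.2 + t) z = dotZ a z + (s * (z.1 0 : ℝ) + t * (z.2 : ℝ)) := by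
  simp [dotZ, Fin.sum_univ_one]; ring

lemma summable_u {μ : Zd 1 → ℝ} (hpos : ∀ z, 0 ≤ μ z) (h3 : H3 μ) (a : Rd 1) :
    Summable (fun z : Zd 1 => μ z * Real.exp (dotZ a z + 2 * nz z)) := by
  set g : ℝ → ℝ → Zd 1 → ℝ := fun s t z =>
    μ z * Real.exp (dotZ ((fun i => a.1 i + s), a.2 + t) z) with hg
  have hsum : ∀ s t : ℝ, Summable (g s t) := fun s t => h3 _
  have hbig : Summable (fun z => g 2 2 z + g 2 (-2) z + (g (-2) 2 z + g (-2) (-2) z)) :=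
    ((hsum 2 2).add (hsum 2 (-2))).add ((hsum (-2) 2).add (hsum (-2) (-2)))
  refine hbig.of_nonneg_of_le (fun z => mul_nonneg (hpos z) (Real.exp_pos _).le) (fun z => ?_)
  have key : Real.exp (dotZ a z + 2 * nz z) ≤
      Real.exp (dotZ a z + (2 * (z.1 0:ℝ) + 2 * (z.2:ℝ)))
      + Real.exp (dotZ a z + (2 * (z.1 0:ℝ) + (-2) * (z.2:ℝ)))
      + (Real.exp (dotZ a z + ((-2) * (z.1 0:ℝ) + 2 * (z.2:ℝ)))
      + Real.exp (dotZ a z + ((-2) * (z.1 0:ℝ) + (-2) * (z.2:ℝ)))) := by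
    have e1 := (Real.exp_pos (dotZ a z + (2 * (z.1 0:ℝ) + 2 * (z.2:ℝ)))).le
    have e2 := (Real.exp_pos (dotZ a z + (2 * (z.1 0:ℝ) + (-2) * (z.2:ℝ)))).le
    have e3 := (Real.exp_pos (dotZ a z + ((-2) * (z.1 0:ℝ) + 2 * (z.2:ℝ)))).le
    have e4 := (Real.exp_pos (dotZ a z + ((-2) * (z.1 0:ℝ) + (-2) * (z.2:ℝ)))).le
    rcases abs_cases ((z.1 0 : ℤ) : ℝ) with ⟨h1, _⟩ | ⟨h1, _⟩ <;>
      rcases abs_cases ((z.2 : ℤ) : ℝ) with ⟨h2, _⟩ | ⟨h2, _⟩ <;>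
      · rw [nz, h1, h2]
        first
        | (rw [show dotZ a z + 2 * ((z.1 0:ℝ) + (z.2:ℝ)) = dotZ a z + (2 * (z.1 0:ℝ) + 2 * (z.2:ℝ)) by ring]; linarith)
        | (rw [show dotZ a z + 2 * ((z.1 0:ℝ) + -(z.2:ℝ)) = dotZ a z + (2 * (z.1 0:ℝ) + (-2) * (z.2:ℝ)) by ring]; linarith)
        | (rw [show dotZ a z + 2 * (-(z.1 0:ℝ) + (z.2:ℝ)) = dotZ a z + ((-2) * (z.1 0:ℝ) + 2 * (z.2:ℝ)) by ring]; linarith)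
        | (rw [show dotZ a z + 2 * (-(z.1 0:ℝ) + -(z.2:ℝ)) = dotZ a z + ((-2) * (z.1 0:ℝ) + (-2) * (z.2:ℝ)) by ring]; linarith)
  calc μ z * Real.exp (dotZ a z + 2 * nz z)
      ≤ μ z * (Real.exp (dotZ a z + (2 * (z.1 0:ℝ) + 2 * (z.2:ℝ)))
        + Real.exp (dotZ a z + (2 * (z.1 0:ℝ) + (-2) * (z.2:ℝ)))
        + (Real.exp (dotZ a z + ((-2) * (z.1 0:ℝ) + 2 * (z.2:ℝ)))
        + Real.exp (dotZ a z + ((-2) * (z.1 0:ℝ) + (-2) * (z.2:ℝ))))) :=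
        mul_le_mul_of_nonneg_left key (hpos z)
    _ = g 2 2 z + g 2 (-2) z + (g (-2) 2 z + g (-2) (-2) z) := by
        simp only [hg, dotZ_shift]; ring

lemma norm_fder_le {μ : Zd 1 → ℝ} (hpos : ∀ z, 0 ≤ μ z) (a x : Rd 1) (hx : x ∈ Metric.ball a 1)
    (z : Zd 1) : ‖(μ z * Real.exp (ell z x)) • ell z‖ ≤ μ z * Real.exp (dotZ a z + 2 * nz z) := by
  have hle : ell z x ≤ dotZ a z + nz z := by
    have : ell z x - ell z a ≤ nz z := by
      calc ell z x - ell z a = ell z (x - a) := by rw [map_sub]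
        _ ≤ |ell z (x - a)| := le_abs_self _
        _ ≤ ‖ell z‖ * ‖x - a‖ := (ell z).le_opNorm _
        _ ≤ nz z * 1 := by
            apply mul_le_mul (norm_ell_le z) _ (norm_nonneg _) (nz_nonneg z)
            exact le_of_lt (by simpa [dist_eq_norm] using hx)
        _ = nz z := mul_one _
    rw [dotZ_eq]; linarith
  have hn : ‖(μ z * Real.exp (ell z x)) • ell z‖ = μ z * Real.exp (ell z x) * ‖ell z‖ := by
    rw [norm_smul (μ z * Real.exp (ell z x)) (ell z), Real.norm_eq_abs,
      abs_of_nonneg (mul_nonneg (hpos z) (Real.exp_pos _).le)]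
  rw [hn]
  calc μ z * Real.exp (ell z x) * ‖ell z‖
      ≤ μ z * Real.exp (dotZ a z + nz z) * Real.exp (nz z) := by
        apply mul_le_mul _ ((norm_ell_le z).trans (by linarith [Real.add_one_le_exp (nz z)]))
          (norm_nonneg _) (mul_nonneg (hpos z) (Real.exp_pos _).le)
        exact mul_le_mul_of_nonneg_left (Real.exp_le_exp.mpr hle) (hpos z)
    _ = μ z * Real.exp (dotZ a z + 2 * nz z) := by rw [mul_assoc, ← Real.exp_add]; ring_nf

lemma hasFDerivAt_phi {μ : Zd 1 → ℝ} (hpos : ∀ z, 0 ≤ μ z) (h3 : H3 μ) (a : Rd 1) :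
    HasFDerivAt (phi μ) (∑' z, (μ z * Real.exp (dotZ a z)) • ell z) a := by
  have hphi : phi μ = fun x => ∑' z, μ z * Real.exp (ell z x) := by
    funext x; unfold phi; simp only [dotZ_eq]
  have hder : ∀ (z : Zd 1) (x : Rd 1), HasFDerivAt (fun y => μ z * Real.exp (ell z y))
      ((μ z * Real.exp (ell z x)) • ell z) x := by
    intro z x
    have h := ((ell z).hasFDerivAt (x := x)).exp.const_mul (μ z)
    simpa [smul_smul] using h
  have key := hasFDerivAt_tsum_of_isPreconnected (summable_u hpos h3 a)
    Metric.isOpen_ball (convex_ball a 1).isPreconnected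
    (fun z x _ => hder z x) (fun z x hx => norm_fder_le hpos a x hx z)
    (Metric.mem_ball_self one_pos) (by simpa only [dotZ_eq] using h3 a)
    (Metric.mem_ball_self one_pos)
  rw [hphi]
  simpa only [dotZ_eq] using key

lemma summable_fder {μ : Zd 1 → ℝ} (hpos : ∀ z, 0 ≤ μ z) (h3 : H3 μ) (a : Rd 1) :
    Summable (fun z : Zd 1 => (μ z * Real.exp (dotZ a z)) • ell z) := by
  refine Summable.of_norm ((summable_u hpos h3 a).of_nonneg_of_le
    (fun z => norm_nonneg _) (fun z => ?_))
  simpa only [dotZ_eq] using norm_fder_le hpos a a (Metric.mem_ball_self one_pos) z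

lemma dBeta_phi {μ : Zd 1 → ℝ} (hpos : ∀ z, 0 ≤ μ z) (h3 : H3 μ) (a : Rd 1) :
    dBeta (phi μ) a = ∑' z, μ z * Real.exp (dotZ a z) * (z.2 : ℝ) := by
  have h := hasFDerivAt_phi hpos h3 a
  rw [dBeta, h.fderiv]
  have := (ContinuousLinearMap.apply ℝ ℝ ((0, 1) : Rd 1)).map_tsum (summable_fder hpos h3 a)
  rw [show (∑' z, (μ z * Real.exp (dotZ a z)) • ell z) ((0,1) : Rd 1)
    = ContinuousLinearMap.apply ℝ ℝ ((0, 1) : Rd 1) (∑' z, (μ z * Real.exp (dotZ a z)) • ell z) from rfl, this]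
  congr 1; funext z
  simp [ell_apply]

lemma summable_dterm {μ : Zd 1 → ℝ} (hpos : ∀ z, 0 ≤ μ z) (h3 : H3 μ) (a : Rd 1) :
    Summable (fun z : Zd 1 => μ z * Real.exp (dotZ a z) * (z.2 : ℝ)) := by
  have := (summable_fder hpos h3 a).map (ContinuousLinearMap.apply ℝ ℝ ((0, 1) : Rd 1))
    (ContinuousLinearMap.apply ℝ ℝ ((0, 1) : Rd 1)).continuous
  refine this.congr (fun z => ?_)
  simp [ell_apply]

lemma exists_up {μ μ₀ : Zd 1 → ℝ} (hpos : ∀ z, 0 ≤ μ₀ z) (h1 : H1 μ μ₀) :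
    ∃ z : Zd 1, 0 < μ₀ z ∧ 0 < z.2 := by
  by_contra hcon
  push_neg at hcon
  have hzero : ∀ z : Zd 1, 0 < z.2 → μ₀ z = 0 := by
    intro z hz
    rcases (hpos z).eq_or_lt with h | h
    · exact h.symm
    · exact absurd hz (not_lt.mpr (hcon z h))
  have main : ∀ n (w : Ed 1), w.2 ≠ 0 → kerN μ μ₀ n ((0 : Fin 1 → ℤ), (0 : ℕ)) w = 0 := by
    intro n
    induction n with
    | zero =>
      intro w hw
      show (if ((0 : Fin 1 → ℤ), (0 : ℕ)) = w then (1:ℝ) else 0) = 0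
      rw [if_neg]
      intro h
      exact hw (by rw [← h])
    | succ n ih =>
      intro w hw
      have hterm : ∀ v : Ed 1, kerN μ μ₀ n ((0 : Fin 1 → ℤ), (0 : ℕ)) v * ker μ μ₀ v w = 0 := by
        intro v
        rcases eq_or_ne v.2 0 with hv | hv
        · have hk : ker μ μ₀ v w = 0 := by
            rw [ker, if_pos hv]
            apply hzero
            show (0:ℤ) < (w.2 : ℤ) - (v.2 : ℤ)
            rw [hv]
            simpa using Int.natCast_pos.mpr (Nat.pos_of_ne_zero hw)
          rw [hk, mul_zero]
        · rw [ih v hv, zero_mul]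
      show (∑' v : Ed 1, kerN μ μ₀ n ((0 : Fin 1 → ℤ), (0 : ℕ)) v * ker μ μ₀ v w) = 0
      rw [tsum_congr hterm, tsum_zero]
  obtain ⟨n, hn⟩ := h1 ((0 : Fin 1 → ℤ), (0 : ℕ)) ((0 : Fin 1 → ℤ), (1 : ℕ))
  rw [main n _ (by norm_num)] at hn
  exact lt_irrefl 0 hn

lemma decr_eventually {g : ℝ → ℝ} {m : ℝ} (h : HasDerivAt g m 0) (hm : m < 0) :
    ∀ᶠ t in 𝓝[>] (0 : ℝ), g t < g 0 := by
  have hs := hasDerivAt_iff_tendsto_slope.mp h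
  have h1 : ∀ᶠ t in 𝓝[≠] (0 : ℝ), slope g 0 t < 0 := hs.eventually (eventually_lt_nhds hm)
  have h2 : ∀ᶠ t in 𝓝[>] (0 : ℝ), slope g 0 t < 0 :=
    h1.filter_mono (nhdsWithin_mono 0 (fun t ht => ne_of_gt ht))
  filter_upwards [h2, self_mem_nhdsWithin] with t ht ht'
  have htpos : (0:ℝ) < t := ht'
  rw [slope_def_field] at ht
  have := (div_neg_iff).mp (by simpa using ht)
  rcases this with ⟨h', _⟩ | ⟨h', h''⟩
  · linarith
  · linarith

lemma hasDerivAt_line {f : Rd 1 → ℝ} {L : Rd 1 →L[ℝ] ℝ} {a : Rd 1} (h : HasFDerivAt f L a)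
    (v : Rd 1) : HasDerivAt (fun t : ℝ => f (a + t • v)) (L v) 0 := by
  have hc : HasDerivAt (fun t : ℝ => a + t • v) v 0 := by
    simpa using ((hasDerivAt_id (0 : ℝ)).smul_const v).const_add a
  have h' : HasFDerivAt f L (a + (0 : ℝ) • v) := by simpa using h
  exact h'.comp_hasDerivAt 0 hc

def vdn : Rd 1 := ((0 : Fin 1 → ℝ), (-1 : ℝ))

lemma tendsto_line (a w : Rd 1) : Tendsto (fun t : ℝ => a + t • w) (𝓝 0) (𝓝 a) := by
  have hc : Continuous (fun t : ℝ => a + t • w) :=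
    continuous_const.add (continuous_id.smul continuous_const)
  simpa only [zero_smul, add_zero] using hc.tendsto (0:ℝ)

lemma phi_tendsto_line {μ : Zd 1 → ℝ} (hpos : ∀ z, 0 ≤ μ z) (h3 : H3 μ) (a w : Rd 1) :
    Tendsto (fun t : ℝ => phi μ (a + t • w)) (𝓝 0) (𝓝 (phi μ a)) := by
  have hcont : ContinuousAt (phi μ) a :=
    (hasFDerivAt_phi hpos h3 a).differentiableAt.continuousAt
  have := Filter.Tendsto.comp (g := phi μ) hcont (tendsto_line a w)
  exact this

lemma hasDerivAt_down {μ : Zd 1 → ℝ} (hpos : ∀ z, 0 ≤ μ z) (h3 : H3 μ) (a : Rd 1) :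
    HasDerivAt (fun t : ℝ => phi μ (a + t • vdn)) (-(dBeta (phi μ) a)) 0 := by
  rw [show vdn = (((0 : Fin 1 → ℝ), (-1 : ℝ)) : Rd 1) from rfl]
  have h := hasFDerivAt_phi hpos h3 a
  have hline := hasDerivAt_line h (((0 : Fin 1 → ℝ), (-1 : ℝ)) : Rd 1)
  have hv : (((0 : Fin 1 → ℝ), (-1 : ℝ)) : Rd 1) = -(((0 : Fin 1 → ℝ), (1 : ℝ)) : Rd 1) := by
    simp [Prod.ext_iff]
  have happ : (∑' z, (μ z * Real.exp (dotZ a z)) • ell z) (((0 : Fin 1 → ℝ), (-1 : ℝ)) : Rd 1)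
      = -((∑' z, (μ z * Real.exp (dotZ a z)) • ell z) (((0 : Fin 1 → ℝ), (1 : ℝ)) : Rd 1)) := by
    rw [hv, map_neg]
  rw [dBeta, h.fderiv, ← happ]
  exact hline

lemma phi_segment {μ : Zd 1 → ℝ} (hpos : ∀ z, 0 ≤ μ z) (h3 : H3 μ) (a b : Rd 1) {t : ℝ}
    (ht0 : 0 ≤ t) (ht1 : t ≤ 1) :
    phi μ (a + t • (b - a)) ≤ (1 - t) * phi μ a + t * phi μ b := by
  have hpt : ∀ z : Zd 1, μ z * Real.exp (dotZ (a + t • (b - a)) z)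
      ≤ (1 - t) * (μ z * Real.exp (dotZ a z)) + t * (μ z * Real.exp (dotZ b z)) := by
    intro z
    have hd : dotZ (a + t • (b - a)) z = (1 - t) * dotZ a z + t * dotZ b z := by
      simp only [dotZ_eq, map_add, map_smul, map_sub, smul_eq_mul]
      ring
    rw [hd]
    have hconv := convexOn_exp.2 (Set.mem_univ (dotZ a z)) (Set.mem_univ (dotZ b z))
      (by linarith : (0:ℝ) ≤ 1 - t) ht0 (by ring)
    simp only [smul_eq_mul] at hconv
    calc μ z * Real.exp ((1 - t) * dotZ a z + t * dotZ b z)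
        ≤ μ z * ((1 - t) * Real.exp (dotZ a z) + t * Real.exp (dotZ b z)) :=
          mul_le_mul_of_nonneg_left hconv (hpos z)
      _ = (1 - t) * (μ z * Real.exp (dotZ a z)) + t * (μ z * Real.exp (dotZ b z)) := by ring
  have hsum : Summable (fun z : Zd 1 => (1 - t) * (μ z * Real.exp (dotZ a z))
      + t * (μ z * Real.exp (dotZ b z))) := ((h3 a).mul_left (1 - t)).add ((h3 b).mul_left t)
  calc phi μ (a + t • (b - a)) ≤ ∑' z, ((1 - t) * (μ z * Real.exp (dotZ a z))
        + t * (μ z * Real.exp (dotZ b z))) := (h3 _).tsum_le_tsum hpt hsum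
    _ = (1 - t) * phi μ a + t * phi μ b := by
        rw [Summable.tsum_add ((h3 a).mul_left (1 - t)) ((h3 b).mul_left t), tsum_mul_left, tsum_mul_left]
        rfl

lemma dBeta0_pos {μ₀ : Zd 1 → ℝ} (hpos : ∀ z, 0 ≤ μ₀ z) (h3' : H3 μ₀)
    (h0' : ∀ z : Zd 1, z.2 < 0 → μ₀ z = 0)
    (z₀ : Zd 1) (hz₀ : 0 < μ₀ z₀) (hup : 0 < z₀.2) (a : Rd 1) : 0 < dBeta (phi μ₀) a := by
  rw [dBeta_phi hpos h3' a]
  refine Summable.tsum_pos (summable_dterm hpos h3' a) (fun z => ?_) z₀ ?_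
  · rcases lt_or_ge z.2 0 with h | h
    · rw [h0' z h]; simp
    · have : (0:ℝ) ≤ (z.2 : ℝ) := by exact_mod_cast h
      exact mul_nonneg (mul_nonneg (hpos z) (Real.exp_pos _).le) this
  · have : (0:ℝ) < (z₀.2 : ℝ) := by exact_mod_cast hup
    exact mul_pos (mul_pos hz₀ (Real.exp_pos _)) this

/-- for `d = 2` (Lean parameter `1`), under (H0), (H1), (H3), if
`inf max(φ,φ₀) > inf φ` and the minimum of `max(φ,φ₀)` is attained at `a*`, then
`φ(a*) = φ₀(a*)`, `(∂φ/∂β)(a*) ≤ 0` and `(∂φ₀/∂β)(a*) > 0`. -/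
theorem minimizer_properties (μ μ₀ : Zd 1 → ℝ)
    (hμ : IsMeasure μ) (hμ₀ : IsMeasure μ₀)
    (h0 : H0 μ μ₀) (h1 : H1 μ μ₀) (h3 : H3 μ) (h3' : H3 μ₀)
    (hgap : sInf (Set.range fun a : Rd 1 => phi μ a) <
      sInf (Set.range fun a : Rd 1 => max (phi μ a) (phi μ₀ a)))
    (astar : Rd 1)
    (hmin : ∀ a : Rd 1, max (phi μ astar) (phi μ₀ astar) ≤ max (phi μ a) (phi μ₀ a)) :
    phi μ astar = phi μ₀ astar ∧
      dBeta (phi μ) astar ≤ 0 ∧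
      0 < dBeta (phi μ₀) astar := by
  obtain ⟨hμpos, -, -⟩ := hμ
  obtain ⟨hμ₀pos, -, -⟩ := hμ₀
  obtain ⟨z₀, hz₀, hup⟩ := exists_up hμ₀pos h1
  have hD0 : ∀ a : Rd 1, 0 < dBeta (phi μ₀) a := dBeta0_pos hμ₀pos h3' h0.2 z₀ hz₀ hup
  have hdec0 : ∀ᶠ t in 𝓝[>] (0:ℝ), phi μ₀ (astar + t • vdn) < phi μ₀ astar := by
    have h := decr_eventually (hasDerivAt_down hμ₀pos h3' astar) (neg_lt_zero.mpr (hD0 astar))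
    simpa only [zero_smul, add_zero] using h
  have heq : phi μ astar = phi μ₀ astar := by
    rcases lt_trichotomy (phi μ astar) (phi μ₀ astar) with hlt | he | hgt
    · exfalso
      have ht : Tendsto (fun t : ℝ => phi μ (astar + t • vdn)) (𝓝 0) (𝓝 (phi μ astar)) :=
        phi_tendsto_line hμpos h3 astar vdn
      have h1' : ∀ᶠ t in 𝓝[>] (0:ℝ), phi μ (astar + t • vdn) < phi μ₀ astar :=
        (ht.eventually (eventually_lt_nhds hlt)).filter_mono nhdsWithin_le_nhds
      obtain ⟨t, h₁, h₂⟩ := (hdec0.and h1').exists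
      have hm := hmin (astar + t • vdn)
      have hmax : max (phi μ (astar + t • vdn)) (phi μ₀ (astar + t • vdn)) < phi μ₀ astar :=
        max_lt h₂ h₁
      have := le_max_right (phi μ astar) (phi μ₀ astar)
      linarith
    · exact he
    · exfalso
      have hbdd : BddBelow (Set.range fun a : Rd 1 => max (phi μ a) (phi μ₀ a)) := by
        refine ⟨max (phi μ astar) (phi μ₀ astar), ?_⟩
        rintro x ⟨c, rfl⟩
        exact hmin c
      have hile : sInf (Set.range fun a : Rd 1 => max (phi μ a) (phi μ₀ a))
          ≤ max (phi μ astar) (phi μ₀ astar) := csInf_le hbdd ⟨astar, rfl⟩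
      have hMeq : max (phi μ astar) (phi μ₀ astar) = phi μ astar := max_eq_left hgt.le
      have hinfφ : sInf (Set.range fun a : Rd 1 => phi μ a) < phi μ astar := by
        rw [← hMeq]; exact lt_of_lt_of_le hgap hile
      have hb : ∃ b, phi μ b < phi μ astar := by
        by_contra hcon; push_neg at hcon
        exact absurd (le_csInf (Set.range_nonempty _) (by rintro x ⟨c, rfl⟩; exact hcon c))
          (not_le.mpr hinfφ)
      obtain ⟨b, hbb⟩ := hb
      have hcont0 : Tendsto (fun t : ℝ => phi μ₀ (astar + t • (b - astar))) (𝓝 0)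
          (𝓝 (phi μ₀ astar)) := phi_tendsto_line hμ₀pos h3' astar (b - astar)
      have hev1 : ∀ᶠ t in 𝓝[>] (0:ℝ), phi μ₀ (astar + t • (b - astar)) < phi μ astar :=
        (hcont0.eventually (eventually_lt_nhds hgt)).filter_mono nhdsWithin_le_nhds
      have hev2 : ∀ᶠ t in 𝓝[>] (0:ℝ), t < 1 :=
        (eventually_lt_nhds (by norm_num : (0:ℝ) < 1)).filter_mono nhdsWithin_le_nhds
      obtain ⟨t, ht1, ht2, ht3⟩ := (hev1.and (hev2.and self_mem_nhdsWithin)).exists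
      have ht3' : (0:ℝ) < t := ht3
      have hseg := phi_segment hμpos h3 astar b ht3'.le ht2.le
      have hprod : 0 < t * (phi μ astar - phi μ b) := mul_pos ht3' (sub_pos.mpr hbb)
      have hφct : phi μ (astar + t • (b - astar)) < phi μ astar := by nlinarith
      have hm := hmin (astar + t • (b - astar))
      rw [hMeq] at hm
      exact absurd (lt_of_le_of_lt hm (max_lt hφct ht1)) (lt_irrefl _)
  have h2 : dBeta (phi μ) astar ≤ 0 := by
    by_contra hcon
    push_neg at hcon
    have hdec : ∀ᶠ t in 𝓝[>] (0:ℝ), phi μ (astar + t • vdn) < phi μ astar := by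
      simpa only [zero_smul, add_zero] using
        decr_eventually (hasDerivAt_down hμpos h3 astar) (neg_lt_zero.mpr hcon)
    obtain ⟨t, ht1, ht2⟩ := (hdec.and hdec0).exists
    have hm := hmin (astar + t • vdn)
    have hmax : max (phi μ (astar + t • vdn)) (phi μ₀ (astar + t • vdn))
        < max (phi μ astar) (phi μ₀ astar) :=
      max_lt (lt_of_lt_of_le ht1 (le_max_left _ _)) (lt_of_lt_of_le ht2 (le_max_right _ _))
    exact absurd hm (not_le.mpr hmax)
  exact ⟨heq, h2, hD0 astar⟩

end RWHalfspace
end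
end
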